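/- Let M be a matroid with γ(M) = k + ε, where k is a nonnegative integer and 0 ≤ ε < 1; here γ(M) = max over nonempty X ⊆ E(M) of |X|/r(X). Then E(M) can be partitioned into k+1 independent sets, one of which has size at most ε·r(M). -/

import Mathlib

open Set

variable {α : Type*}

/-- The rank of a set `X` in a matroid: size of a largest independent subset of `X`. -/
noncomputable def Matroid.rkSet (M : Matroid α) (X : Set α) : ℕ :=
  sSup {n | ∃ I, M.Indep I ∧ I ⊆ X ∧ I.ncard = n}

/-- The rank of a matroid. -/
noncomputable def Matroid.rank (M : Matroid α) : ℕ := M.rkSet M.E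

/-- A circuit is a minimal dependent set. -/
def Matroid.IsCircuitDef (M : Matroid α) (C : Set α) : Prop :=
  M.Dep C ∧ ∀ D, D ⊂ C → M.Indep D

/-- A paving matroid: every circuit has size at least the rank. -/
def Matroid.Paving (M : Matroid α) : Prop :=
  ∀ C, M.IsCircuitDef C → M.rank ≤ C.ncard

/-- Deletion of a set from a matroid. -/
noncomputable def Matroid.del (M : Matroid α) (D : Set α) : Matroid α :=
  M.restrict (M.E \ D)

/-- A cyclic ordering of a matroid, given as a list: every `M.rank`
cyclically-consecutive entries form a base. -/
def Matroid.IsCyclicOrdering (M : Matroid α) (l : List α) : Prop :=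
  l.Nodup ∧ {x | x ∈ l} = M.E ∧
    ∀ i : ℕ, M.IsBase {x | x ∈ (l.rotate i).take M.rank}

namespace Matroid

variable {M : Matroid α} [M.Finite] {t : ℕ} {J : Fin t → Set α} {e x y : α} {I K X : Set α}

lemma Indep.fin (hI : M.Indep I) : I.Finite := M.set_finite I hI.subset_ground

lemma rkSet_bdd : ∀ n ∈ {n | ∃ I, M.Indep I ∧ I ⊆ X ∧ I.ncard = n}, n ≤ M.E.ncard := by
  rintro n ⟨I, hI, -, rfl⟩
  exact ncard_le_ncard hI.subset_ground M.ground_finite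

lemma le_rkSet (hI : M.Indep I) (hIX : I ⊆ X) : I.ncard ≤ M.rkSet X :=
  le_csSup ⟨M.E.ncard, rkSet_bdd⟩ ⟨I, hI, hIX, rfl⟩

lemma rkSet_le {n : ℕ} (h : ∀ I, M.Indep I → I ⊆ X → I.ncard ≤ n) : M.rkSet X ≤ n :=
  csSup_le ⟨0, ∅, M.empty_indep, empty_subset X, ncard_empty α⟩ (by rintro m ⟨I, hI, hIX, rfl⟩; exact h I hI hIX)

/-- If `K` is independent and `X ⊆ cl K`, then `r X ≤ |K|`. -/
lemma rkSet_le_ncard_of_subset_closure (hK : M.Indep K) (hX : X ⊆ M.closure K) :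
    M.rkSet X ≤ K.ncard := by
  refine rkSet_le fun I hI hIX => ?_
  obtain ⟨I', hI', hII'⟩ := hI.subset_isBasis_of_subset (hIX.trans hX) (M.closure_subset_ground K)
  have h1 : I'.encard = K.encard := hI'.encard_eq_encard hK.isBasis_closure
  have h2 : I'.ncard = K.ncard := by rw [ncard_def, h1, ← ncard_def]
  exact h2 ▸ ncard_le_ncard hII' (M.set_finite I' hI'.indep.subset_ground)

lemma rkSet_le_rank (hX : X ⊆ M.E) : M.rkSet X ≤ M.rank :=
  rkSet_le fun I hI hIX => le_rkSet hI (hIX.trans hX)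

/-- Fundamental-circuit lemma: if `x ∈ cl I \ I` with `I` independent, then `x` is spanned by
the set of `y ∈ I` for which the swap `I - y + x` is independent. -/
lemma mem_closure_swaps (hI : M.Indep I) (hxI : x ∉ I) (hx : x ∈ M.closure I) :
    x ∈ M.closure {y ∈ I | M.Indep (insert x (I \ {y}))} := by
  -- choose S ⊆ I minimal (by ncard) with x ∈ cl S
  have hfin := hI.fin
  have hne : {n | ∃ S ⊆ I, x ∈ M.closure S ∧ S.ncard = n}.Nonempty := ⟨I.ncard, I, Subset.rfl, hx, rfl⟩
  obtain ⟨S, hSI, hxS, hScard⟩ := Nat.sInf_mem hne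
  have hmin : ∀ T ⊆ I, x ∈ M.closure T → S.ncard ≤ T.ncard := fun T hTI hxT =>
    hScard ▸ Nat.sInf_le ⟨T, hTI, hxT, rfl⟩
  have hSsub : ∀ y ∈ S, x ∉ M.closure (S \ {y}) := by
    intro y hy hxc
    have := hmin _ ((diff_subset).trans hSI) hxc
    have hlt : (S \ {y}).ncard < S.ncard :=
      ncard_diff_singleton_lt_of_mem hy (hfin.subset hSI)
    omega
  have hSD : S ⊆ {y ∈ I | M.Indep (insert x (I \ {y}))} := by
    intro y hyS
    refine ⟨hSI hyS, ?_⟩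
    have hIy : M.Indep (I \ {y}) := hI.subset diff_subset
    by_contra hdep
    have hxE : x ∈ M.E := M.closure_subset_ground _ hx
    have hxcl : x ∈ M.closure (I \ {y}) := by
      by_contra hxn
      exact hdep ((hIy.insert_indep_iff_of_notMem (fun h => hxI h.1)).2 ⟨hxE, hxn⟩)
    -- exchange : x ∈ cl S = cl (insert y (S\{y})), x ∉ cl (S\{y}) ⟹ y ∈ cl (insert x (S\{y}))
    have hxS' : x ∈ M.closure (insert y (S \ {y})) := by
      rwa [insert_diff_singleton, insert_eq_of_mem hyS]
    have hy' : y ∈ M.closure (insert x (S \ {y})) := mem_closure_insert (hSsub y hyS) hxS'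
    have hsub : M.closure (insert x (S \ {y})) ⊆ M.closure (I \ {y}) := by
      rw [← closure_insert_eq_of_mem_closure hxcl]
      exact M.closure_subset_closure (insert_subset_insert (diff_subset_diff_left hSI))
    exact hI.notMem_closure_diff_of_mem (hSI hyS) (hsub hy')
  exact M.closure_subset_closure hSD hxS


def Arc (M : Matroid α) (J : Fin t → Set α) (x y : α) : Prop :=
  ∃ i, y ∈ J i ∧ x ∉ J i ∧ M.Indep (insert x (J i \ {y}))

def CanAug (M : Matroid α) (J : Fin t → Set α) (x : α) : Prop :=
  ∃ i, x ∉ J i ∧ M.Indep (insert x (J i))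

def IsPath (M : Matroid α) (J : Fin t → Set α) (e : α) (m : ℕ) (P : ℕ → α) : Prop :=
  P 0 = e ∧ ∀ s < m, M.Arc J (P s) (P (s + 1))

def IsAugPath (M : Matroid α) (J : Fin t → Set α) (e : α) (m : ℕ) (P : ℕ → α) : Prop :=
  M.IsPath J e m P ∧ M.CanAug J (P m)

lemma disjIns {a : α} {s u : Set α} (h1 : a ∉ u) (h2 : Disjoint s u) : Disjoint (insert a s) u := by
  rw [Set.disjoint_left]
  rintro x (rfl | hx)
  · exact h1
  · exact Set.disjoint_left.1 h2 hx

lemma splice {m a b : ℕ} {P : ℕ → α} (hP : M.IsAugPath J e m P) (hab : a < b) (hbm : b ≤ m)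
    (heq : P a = P b) : ∃ P', M.IsAugPath J e (m - (b - a)) P' := by
  refine ⟨fun s => if s ≤ a then P s else P (s + (b - a)), ⟨?_, ?_⟩, ?_⟩
  · simp [hP.1.1]
  · intro s hs
    rcases lt_trichotomy s a with h | rfl | h
    · simp only [if_pos h.le, if_pos (Nat.succ_le_of_lt h)]
      exact hP.1.2 s (by omega)
    · have h1 : ¬ (s + 1 ≤ s) := by omega
      have : s + 1 + (b - s) = b + 1 := by omega
      simpa [heq, h1, this] using hP.1.2 b (by omega)
    · have h1 : ¬ (s ≤ a) := by omega
      have h2 : ¬ (s + 1 ≤ a) := by omega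
      have : s + 1 + (b - a) = (s + (b - a)) + 1 := by omega
      simp only [h1, h2, if_false, this]
      exact hP.1.2 _ (by omega)
  · rcases eq_or_lt_of_le hbm with rfl | hbm'
    · have h1 : b - (b - a) = a := by omega
      simp only [h1, le_refl, if_true, heq]
      exact hP.2
    · have h1 : ¬ (m - (b - a) ≤ a) := by omega
      have h2 : m - (b - a) + (b - a) = m := by omega
      simp only [h1, if_false, h2]
      exact hP.2

lemma shortcut {m s : ℕ} {P : ℕ → α} (hP : M.IsAugPath J e m P) (hs : 2 ≤ s) (hsm : s ≤ m)
    (harc : M.Arc J e (P s)) : ∃ P', M.IsAugPath J e (m - s + 1) P' := by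
  refine ⟨fun u => if u = 0 then e else P (u + s - 1), ⟨rfl, ?_⟩, ?_⟩
  · intro u hu
    rcases Nat.eq_zero_or_pos u with rfl | hu0
    · simpa using harc
    · have h1 : u ≠ 0 := by omega
      have h2 : u + 1 ≠ 0 := by omega
      have h3 : u + 1 + s - 1 = (u + s - 1) + 1 := by omega
      simp only [h1, h2, if_false, h3]
      exact hP.1.2 _ (by omega)
  · have h1 : m - s + 1 ≠ 0 := by omega
    have h2 : m - s + 1 + s - 1 = m := by omega
    simp only [h1, if_false, h2]
    exact hP.2


/-- Direct augmentation: add `e` to a part it fits in. -/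
lemma augdirect (hind : ∀ i, M.Indep (J i)) (hdisj : ∀ i j, i ≠ j → Disjoint (J i) (J j))
    (heJ : ∀ i, e ∉ J i) (h : M.CanAug J e) :
    ∃ J' : Fin t → Set α, (∀ i, M.Indep (J' i)) ∧ (∀ i j, i ≠ j → Disjoint (J' i) (J' j)) ∧
      (⋃ i, J' i) = insert e (⋃ i, J i) := by
  obtain ⟨i, hei, hins⟩ := h
  refine ⟨fun i' => if i' = i then insert e (J i) else J i', fun i' => ?_, fun a b hab => ?_, ?_⟩
  · by_cases h' : i' = i <;> simp [h', hins, hind i']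
  · dsimp only
    by_cases ha : a = i
    · have hb : b ≠ i := fun h => hab (ha.trans h.symm)
      rw [if_pos ha, if_neg hb]
      exact disjIns (heJ b) (hdisj i b fun h => hb h.symm)
    · by_cases hb : b = i
      · rw [if_neg ha, if_pos hb]
        exact (disjIns (heJ a) (hdisj i a fun h => ha h.symm)).symm
      · rw [if_neg ha, if_neg hb]; exact hdisj a b hab
  · ext z
    simp only [mem_iUnion, mem_insert_iff]
    constructor
    · rintro ⟨i', hz⟩
      by_cases h' : i' = i
      · subst h'; rw [if_pos rfl] at hz
        rcases hz with rfl | hz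
        · exact Or.inl rfl
        · exact Or.inr ⟨i', hz⟩
      · rw [if_neg h'] at hz; exact Or.inr ⟨i', hz⟩
    · rintro (rfl | ⟨i', hz⟩)
      · exact ⟨i, by simp⟩
      · by_cases h' : i' = i
        · subst h'; exact ⟨i', by simp [hz]⟩
        · exact ⟨i', by simp [h', hz]⟩


/-- Key lemma: if there is an augmenting path from an uncovered element `e`, then `e`
can be absorbed into the family by a sequence of exchanges. -/
lemma augpath [M.Finite] (n : ℕ) :
    ∀ (J : Fin t → Set α) (e : α),
    (∀ i, M.Indep (J i)) → (∀ i j, i ≠ j → Disjoint (J i) (J j)) → e ∈ M.E → (∀ i, e ∉ J i) →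
    (∃ m ≤ n, ∃ P, M.IsAugPath J e m P) →
    ∃ J' : Fin t → Set α, (∀ i, M.Indep (J' i)) ∧ (∀ i j, i ≠ j → Disjoint (J' i) (J' j)) ∧
      (⋃ i, J' i) = insert e (⋃ i, J i) := by
  induction n with
  | zero =>
    rintro J e hind hdisj heE heJ ⟨m, hm, P, hP⟩
    interval_cases m
    exact augdirect hind hdisj heJ (hP.1.1 ▸ hP.2)
  | succ n IH =>
    rintro J e hind hdisj heE heJ ⟨m', hm'n, P', hP'⟩
    have hS : {m | ∃ P, M.IsAugPath J e m P}.Nonempty := ⟨m', P', hP'⟩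
    obtain ⟨P, hP⟩ : ∃ P, M.IsAugPath J e (sInf {m | ∃ P, M.IsAugPath J e m P}) P :=
      Nat.sInf_mem hS
    set m := sInf {m | ∃ P, M.IsAugPath J e m P} with hmdef
    have hmmin : ∀ m'', m'' < m → ¬ ∃ P, M.IsAugPath J e m'' P := fun m'' h hex =>
      Nat.notMem_of_lt_sInf h hex
    have hmn : m ≤ n + 1 := le_trans (Nat.sInf_le ⟨P', hP'⟩) hm'n
    rcases Nat.eq_zero_or_pos m with hm0 | hm1
    · rw [hm0] at hP
      exact augdirect hind hdisj heJ (hP.1.1 ▸ hP.2)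
    -- distinctness of the vertices of a minimal path
    have hdist : ∀ a b, a < b → b ≤ m → P a ≠ P b := by
      intro a b hab hbm heq
      obtain ⟨P'', hP''⟩ := splice hP hab hbm heq
      exact hmmin _ (by omega) ⟨P'', hP''⟩
    have hnoAug : ¬ M.CanAug J e := by
      intro hA
      refine hmmin 0 (by omega) ⟨fun _ => e, ⟨rfl, fun s hs => absurd hs (by omega)⟩, hA⟩
    have hnoshort : ∀ s, 2 ≤ s → s ≤ m → ¬ M.Arc J e (P s) := by
      intro s h2 hsm harc
      obtain ⟨P'', hP''⟩ := shortcut hP h2 hsm harc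
      exact hmmin _ (by omega) ⟨P'', hP''⟩
    have heCl : ∀ i, e ∈ M.closure (J i) := by
      intro i
      by_contra h
      exact hnoAug ⟨i, heJ i, ((hind i).insert_indep_iff_of_notMem (heJ i)).2 ⟨heE, h⟩⟩
    have heClDel : ∀ s, 2 ≤ s → s ≤ m → ∀ i, P s ∈ J i → e ∈ M.closure (J i \ {P s}) := by
      intro s h2 hsm i hPs
      by_contra h
      refine hnoshort s h2 hsm ⟨i, hPs, heJ i, ?_⟩
      exact (((hind i).subset diff_subset).insert_indep_iff_of_notMem
        (fun hc => heJ i hc.1)).2 ⟨heE, h⟩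
    -- the first arc
    have ha0 : M.Arc J e (P 1) := hP.1.1 ▸ hP.1.2 0 hm1
    obtain ⟨j, hy1, he0, hswap⟩ := ha0
    have hne10 : P 1 ≠ e := fun h => hdist 0 1 one_pos hm1 (hP.1.1.trans h.symm)
    have hx1E : P 1 ∈ M.E := (hind j).subset_ground hy1
    -- the swapped family
    set K : Fin t → Set α := fun i => if i = j then insert e (J j \ {P 1}) else J i with hKdef
    have hKj : K j = insert e (J j \ {P 1}) := by simp [hKdef]
    have hKi : ∀ i, i ≠ j → K i = J i := fun i h => by simp [hKdef, h]
    have hKind : ∀ i, M.Indep (K i) := by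
      intro i
      by_cases h : i = j
      · rw [h, hKj]; exact hswap
      · rw [hKi i h]; exact hind i
    have hKsubJ : ∀ i, K i ⊆ insert e (J i) := by
      intro i z hz
      by_cases h : i = j
      · subst h; rw [hKj] at hz
        rcases hz with rfl | hz
        · exact mem_insert _ _
        · exact mem_insert_of_mem _ hz.1
      · rw [hKi i h] at hz; exact mem_insert_of_mem _ hz
    have hKmem : ∀ i z, z ∈ K i → (z = e ∧ i = j) ∨ (z ∈ J i ∧ z ≠ e) := by
      intro i z hz
      by_cases h : i = j
      · subst h; rw [hKj] at hz
        rcases hz with rfl | hz'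
        · exact Or.inl ⟨rfl, rfl⟩
        · exact Or.inr ⟨hz'.1, fun hc => he0 (hc ▸ hz'.1)⟩
      · rw [hKi i h] at hz
        exact Or.inr ⟨hz, fun hc => heJ i (hc ▸ hz)⟩
    have hKdisj : ∀ a b, a ≠ b → Disjoint (K a) (K b) := by
      intro a b hab
      rw [Set.disjoint_left]
      intro z hza hzb
      rcases hKmem a z hza with ⟨hez, haj⟩ | ⟨hza', hze⟩
      · rcases hKmem b z hzb with ⟨hez', hbj⟩ | ⟨hzb', hze'⟩
        · exact hab (haj.trans hbj.symm)
        · exact hze' hez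
      · rcases hKmem b z hzb with ⟨hez, -⟩ | ⟨hzb', -⟩
        · exact hze hez
        · exact Set.disjoint_left.1 (hdisj a b hab) hza' hzb'
    have hx1K : ∀ i, P 1 ∉ K i := by
      intro i hc
      by_cases h : i = j
      · subst h; rw [hKj] at hc
        rcases hc with h' | h'
        · exact hne10 h'
        · exact h'.2 rfl
      · rw [hKi i h] at hc
        exact Set.disjoint_left.1 (hdisj j i fun h' => h h'.symm) hy1 hc
    have heNotCl1 : e ∉ M.closure (J j \ {P 1}) :=
      fun hc => ((((hind j).subset diff_subset).insert_indep_iff_of_notMem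
        (fun hc' => he0 hc'.1)).1 hswap).2 hc
    have hclKj : M.closure (insert e (J j \ {P 1})) = M.closure (J j) := by
      have h2 : e ∈ M.closure (insert (P 1) (J j \ {P 1})) := by
        rw [insert_diff_singleton, insert_eq_of_mem hy1]; exact heCl j
      have h3 : P 1 ∈ M.closure (insert e (J j \ {P 1})) := mem_closure_insert heNotCl1 h2
      calc M.closure (insert e (J j \ {P 1}))
          = M.closure (insert (P 1) (insert e (J j \ {P 1}))) :=
            (closure_insert_eq_of_mem_closure h3).symm
        _ = M.closure (insert e (insert (P 1) (J j \ {P 1}))) := by rw [insert_comm]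
        _ = M.closure (insert e (J j)) := by rw [insert_diff_singleton, insert_eq_of_mem hy1]
        _ = M.closure (J j) := closure_insert_eq_of_mem_closure (heCl j)
    -- arcs of the path survive the swap
    have harc : ∀ s, 1 ≤ s → s < m → M.Arc K (P s) (P (s + 1)) := by
      intro s h1 hsm
      obtain ⟨i, hy, hx, hxind⟩ := hP.1.2 s hsm
      have hxe : P s ≠ e := fun h => hdist 0 s h1 (by omega) (hP.1.1.trans h.symm)
      by_cases hij : i = j
      · subst hij
        have hye : P (s + 1) ≠ e := fun h => hdist 0 (s + 1) (by omega) (by omega)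
          (hP.1.1.trans h.symm)
        have hy1' : P (s + 1) ≠ P 1 := fun h => hdist 1 (s + 1) (by omega) (by omega) h.symm
        set T : Set α := J i \ {P (s + 1)} with hTdef
        have hTind : M.Indep T := (hind i).subset diff_subset
        have hU : K i \ {P (s + 1)} = insert e (T \ {P 1}) := by
          rw [hKj, ← insert_diff_singleton_comm (Ne.symm hye), diff_diff_comm]
        have heT : e ∈ M.closure T := heClDel (s + 1) (by omega) (by omega) i hy
        have heT1 : e ∉ M.closure (T \ {P 1}) := fun hc =>
          heNotCl1 (M.closure_subset_closure (diff_subset_diff_left diff_subset) hc)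
        have hP1T : P 1 ∈ T := ⟨hy1, fun hc => hy1' (by simpa using hc.symm)⟩
        have h2' : e ∈ M.closure (insert (P 1) (T \ {P 1})) := by
          rwa [insert_diff_singleton, insert_eq_of_mem hP1T]
        have h3' : P 1 ∈ M.closure (insert e (T \ {P 1})) := mem_closure_insert heT1 h2'
        have hclU : M.closure (insert e (T \ {P 1})) = M.closure T := by
          calc M.closure (insert e (T \ {P 1}))
              = M.closure (insert (P 1) (insert e (T \ {P 1}))) :=
                (closure_insert_eq_of_mem_closure h3').symm
            _ = M.closure (insert e (insert (P 1) (T \ {P 1}))) := by rw [insert_comm]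
            _ = M.closure (insert e T) := by rw [insert_diff_singleton, insert_eq_of_mem hP1T]
            _ = M.closure T := closure_insert_eq_of_mem_closure heT
        have hxT : P s ∉ T := fun hc => hx hc.1
        have hxE : P s ∈ M.E := hxind.subset_ground (mem_insert _ _)
        have hxclT : P s ∉ M.closure T := ((hTind.insert_indep_iff_of_notMem hxT).1 hxind).2
        have hUind : M.Indep (insert e (T \ {P 1})) := by
          rw [← hU]; exact (hKind i).subset diff_subset
        have hxU : P s ∉ insert e (T \ {P 1}) := by
          intro hmem
          rcases hmem with heq | hc
          · exact hxe heq
          · exact hxT hc.1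
        refine ⟨i, ?_, ?_, ?_⟩
        · rw [hKj]; exact Or.inr ⟨hy, fun hc => hy1' (by simpa using hc)⟩
        · rw [hKj]
          intro hmem
          rcases hmem with heq | hc
          · exact hxe heq
          · exact hx hc.1
        · rw [hU]
          exact (hUind.insert_indep_iff_of_notMem hxU).2 ⟨hxE, hclU ▸ hxclT⟩
      · exact ⟨i, by rw [hKi i hij]; exact hy, by rw [hKi i hij]; exact hx,
          by rw [hKi i hij]; exact hxind⟩
    -- the final augmentation survives
    have hAugK : M.CanAug K (P m) := by
      obtain ⟨i, hx, hxind⟩ := hP.2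
      have hxe : P m ≠ e := fun h => hdist 0 m hm1 le_rfl (hP.1.1.trans h.symm)
      by_cases hij : i = j
      · subst hij
        have hxE : P m ∈ M.E := hxind.subset_ground (mem_insert _ _)
        have hxcl : P m ∉ M.closure (J i) := ((( hind i).insert_indep_iff_of_notMem hx).1 hxind).2
        refine ⟨i, ?_, ?_⟩
        · rw [hKj]
          intro hmem
          rcases hmem with heq | hc
          · exact hxe heq
          · exact hx hc.1
        · rw [hKj]
          refine (hswap.insert_indep_iff_of_notMem ?_).2 ⟨hxE, ?_⟩
          · intro hmem
            rcases hmem with heq | hc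
            · exact hxe heq
            · exact hx hc.1
          · rw [hclKj]; exact hxcl
      · exact ⟨i, by rw [hKi i hij]; exact hx, by rw [hKi i hij]; exact hxind⟩
    -- the shifted path is an augmenting path for `K` from `P 1`
    have hpath' : M.IsAugPath K (P 1) (m - 1) (fun s => P (s + 1)) := by
      refine ⟨⟨rfl, fun s hs => harc (s + 1) (by omega) (by omega)⟩, ?_⟩
      have hmm : m - 1 + 1 = m := by omega
      show M.CanAug K (P (m - 1 + 1))
      rw [hmm]
      exact hAugK
    obtain ⟨J', hJ'ind, hJ'disj, hJ'un⟩ :=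
      IH K (P 1) hKind hKdisj hx1E hx1K ⟨m - 1, by omega, _, hpath'⟩
    refine ⟨J', hJ'ind, hJ'disj, ?_⟩
    rw [hJ'un]
    -- `insert (P 1) (⋃ K) = insert e (⋃ J)`
    ext z
    simp only [mem_insert_iff, mem_iUnion]
    constructor
    · rintro (rfl | ⟨i, hz⟩)
      · exact Or.inr ⟨j, hy1⟩
      · rcases (hKsubJ i hz) with rfl | hz'
        · exact Or.inl rfl
        · exact Or.inr ⟨i, hz'⟩
    · rintro (rfl | ⟨i, hz⟩)
      · exact Or.inr ⟨j, by rw [hKj]; exact mem_insert _ _⟩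
      · by_cases hz1 : z = P 1
        · exact Or.inl hz1
        · by_cases hij : i = j
          · subst hij
            exact Or.inr ⟨i, by rw [hKj]; exact Or.inr ⟨hz, hz1⟩⟩
          · exact Or.inr ⟨i, by rw [hKi i hij]; exact hz⟩

end Matroid

namespace Matroid

variable {M : Matroid α} {t : ℕ} {J : Fin t → Set α} {e x y : α}

def Reach (M : Matroid α) (J : Fin t → Set α) (e x : α) : Prop :=
  ∃ m P, M.IsPath J e m P ∧ P m = x

lemma aug_dichotomy [M.Finite] (J : Fin t → Set α) (e : α)
    (hind : ∀ i, M.Indep (J i)) (hdisj : ∀ i j, i ≠ j → Disjoint (J i) (J j))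
    (heE : e ∈ M.E) (heJ : ∀ i, e ∉ J i) :
    (∃ J' : Fin t → Set α, (∀ i, M.Indep (J' i)) ∧ (∀ i j, i ≠ j → Disjoint (J' i) (J' j)) ∧
      (⋃ i, J' i) = insert e (⋃ i, J i)) ∨
    (∃ A : Set α, e ∈ A ∧ A ⊆ insert e (⋃ i, J i) ∧ ∀ i, A ⊆ M.closure (J i ∩ A)) := by
  by_cases h : ∃ x, M.Reach J e x ∧ M.CanAug J x
  · left
    obtain ⟨x, ⟨m, P, hP, hPm⟩, hx⟩ := h
    exact augpath m J e hind hdisj heE heJ ⟨m, le_rfl, P, hP, hPm ▸ hx⟩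
  · right
    push_neg at h
    have hsub : {x | M.Reach J e x} ⊆ insert e (⋃ i, J i) := by
      rintro x ⟨m, P, hP, rfl⟩
      rcases Nat.eq_zero_or_pos m with rfl | hm
      · rw [hP.1]; exact mem_insert _ _
      · obtain ⟨i, hy, -, -⟩ := hP.2 (m - 1) (by omega)
        have hmm : m - 1 + 1 = m := by omega
        rw [hmm] at hy
        exact mem_insert_of_mem _ (mem_iUnion.2 ⟨i, hy⟩)
    have hsubE : {x | M.Reach J e x} ⊆ M.E := by
      intro x hx
      rcases hsub hx with rfl | hx'
      · exact heE
      · obtain ⟨i, hi⟩ := mem_iUnion.1 hx'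
        exact (hind i).subset_ground hi
    refine ⟨{x | M.Reach J e x},
      ⟨0, fun _ => e, ⟨rfl, fun s hs => absurd hs (by omega)⟩, rfl⟩, hsub, ?_⟩
    intro i x hx
    by_cases hxi : x ∈ J i
    · exact M.subset_closure _ (fun z hz => (hind i).subset_ground hz.1) ⟨hxi, hx⟩
    · have hdep : x ∈ M.closure (J i) := by
        by_contra hcl
        exact h x hx ⟨i, hxi, ((hind i).insert_indep_iff_of_notMem hxi).2 ⟨hsubE hx, hcl⟩⟩
      refine M.closure_subset_closure ?_ (mem_closure_swaps (hind i) hxi hdep)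
      rintro y ⟨hyJ, hyind⟩
      refine ⟨hyJ, ?_⟩
      obtain ⟨m, P, hP, hPm⟩ := hx
      refine ⟨m + 1, fun s => if s = m + 1 then y else P s, ⟨?_, ?_⟩, by simp⟩
      · simp [hP.1]
      · intro s hs
        rcases eq_or_lt_of_le (Nat.lt_succ_iff.1 hs) with rfl | hs'
        · have h1 : s ≠ s + 1 := by omega
          simp only [h1, if_false, if_pos rfl]
          rw [hPm]
          exact ⟨i, hyJ, hxi, hyind⟩
        · have h1 : s ≠ m + 1 := by omega
          have h2 : s + 1 ≠ m + 1 := by omega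
          simp only [h1, h2, if_false]
          exact hP.2 s hs'

/-- Disjoint parts and a disjoint extra set all fit inside `A`. -/
lemma ncard_parts_le {A : Set α} (hA : A.Finite) :
    ∀ {k : ℕ} (s : Fin k → Set α) (B : Set α), (∀ i, s i ⊆ A) →
    (∀ i j, i ≠ j → Disjoint (s i) (s j)) → B ⊆ A → (∀ i, Disjoint B (s i)) →
    (∑ i, (s i).ncard) + B.ncard ≤ A.ncard := by
  intro k
  induction k with
  | zero => intro s B _ _ hB _; simpa using ncard_le_ncard hB hA
  | succ k IH =>
    intro s B hsub hdisj hB hBdisj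
    have hlast : ∀ i : Fin k, (Fin.last k) ≠ i.castSucc := fun i h =>
      (Fin.castSucc_lt_last i).ne' h
    have hBA : B ∪ s (Fin.last k) ⊆ A := union_subset hB (hsub _)
    have hcard : (B ∪ s (Fin.last k)).ncard = B.ncard + (s (Fin.last k)).ncard :=
      ncard_union_eq (hBdisj _) (hA.subset hB) (hA.subset (hsub _))
    have := IH (fun i => s i.castSucc) (B ∪ s (Fin.last k)) (fun i => hsub _)
      (fun i j hij => hdisj _ _ (fun h => hij (Fin.castSucc_injective _ h)))
      hBA
      (fun i => disjoint_union_left.2 ⟨hBdisj _, hdisj _ _ (hlast i)⟩)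
    rw [hcard] at this
    have h2 : (∑ i : Fin k, (s i.castSucc).ncard) + (B.ncard + (s (Fin.last k)).ncard) ≤ A.ncard := by
      simpa using this
    rw [Fin.sum_univ_castSucc]
    omega

lemma iUnion_fin_split {k : ℕ} (J : Fin (k + 1) → Set α) :
    (⋃ i, J i) = (⋃ i : Fin k, J i.castSucc) ∪ J (Fin.last k) := by
  ext z
  simp only [mem_iUnion, mem_union]
  constructor
  · rintro ⟨i, hz⟩
    rcases Fin.eq_castSucc_or_eq_last i with ⟨j, rfl⟩ | rfl
    · exact Or.inl ⟨j, hz⟩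
    · exact Or.inr hz
  · rintro (⟨i, hz⟩ | hz)
    · exact ⟨i.castSucc, hz⟩
    · exact ⟨Fin.last k, hz⟩

end Matroid

namespace Matroid

variable {M : Matroid α} [M.Finite]

lemma edmonds_cover (k : ℕ) (ε : ℚ) (hε0 : 0 ≤ ε) (hε1 : ε < 1)
    (hub : ∀ X ⊆ M.E, X.Nonempty → (X.ncard : ℚ) ≤ ((k : ℚ) + ε) * M.rkSet X) :
    ∃ J : Fin (k + 1) → Set α, (∀ i, M.Indep (J i)) ∧ (∀ i j, i ≠ j → Disjoint (J i) (J j)) ∧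
      (⋃ i, J i) = M.E := by
  suffices h : ∀ n : ℕ, ∀ J : Fin (k + 1) → Set α, (∀ i, M.Indep (J i)) →
      (∀ i j, i ≠ j → Disjoint (J i) (J j)) → (⋃ i, J i) ⊆ M.E →
      (M.E \ ⋃ i, J i).ncard ≤ n → ∃ J' : Fin (k + 1) → Set α, (∀ i, M.Indep (J' i)) ∧
      (∀ i j, i ≠ j → Disjoint (J' i) (J' j)) ∧ (⋃ i, J' i) = M.E by
    exact h M.E.ncard (fun _ => ∅) (fun _ => M.empty_indep) (fun _ _ _ => disjoint_bot_left)
      (by simp) (ncard_le_ncard diff_subset M.ground_finite)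
  intro n
  induction n with
  | zero =>
    intro J hind hdisj hsub hcard
    have hfin : (M.E \ ⋃ i, J i).Finite := M.ground_finite.subset diff_subset
    have hemp : M.E \ ⋃ i, J i = ∅ := by
      rcases eq_empty_or_nonempty (M.E \ ⋃ i, J i) with h | h
      · exact h
      · have := (ncard_pos hfin).2 h; omega
    exact ⟨J, hind, hdisj, subset_antisymm hsub (diff_eq_empty.1 hemp)⟩
  | succ n IH =>
    intro J hind hdisj hsub hcard
    have hfin' : (M.E \ ⋃ i, J i).Finite := M.ground_finite.subset diff_subset
    rcases eq_empty_or_nonempty (M.E \ ⋃ i, J i) with hemp | ⟨e, he⟩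
    · exact ⟨J, hind, hdisj, subset_antisymm hsub (diff_eq_empty.1 hemp)⟩
    · have heJ : ∀ i, e ∉ J i := fun i hc => he.2 (mem_iUnion.2 ⟨i, hc⟩)
      rcases aug_dichotomy J e hind hdisj he.1 heJ with ⟨J', h1, h2, h3⟩ | ⟨A, heA, hAsub, hAcl⟩
      · refine IH J' h1 h2 (h3 ▸ insert_subset he.1 hsub) ?_
        rw [h3]
        have hdd : M.E \ insert e (⋃ i, J i) = (M.E \ ⋃ i, J i) \ {e} := by
          rw [diff_diff, union_singleton]
        rw [hdd, ncard_diff_singleton_of_mem he]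
        have hpos : 0 < (M.E \ ⋃ i, J i).ncard := (ncard_pos hfin').2 ⟨e, he⟩
        omega
      · exfalso
        have hAE : A ⊆ M.E := hAsub.trans (insert_subset he.1 hsub)
        have hAfin : A.Finite := M.ground_finite.subset hAE
        have hri : ∀ i, M.rkSet A ≤ (J i ∩ A).ncard := fun i =>
          rkSet_le_ncard_of_subset_closure ((hind i).subset inter_subset_left) (hAcl i)
        have hcount : (∑ i, (J i ∩ A).ncard) + ({e} : Set α).ncard ≤ A.ncard :=
          ncard_parts_le hAfin (fun i => J i ∩ A) {e} (fun i => inter_subset_right)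
            (fun i j hij => (hdisj i j hij).mono inter_subset_left inter_subset_left)
            (singleton_subset_iff.2 heA)
            (fun i => disjoint_singleton_left.2 fun hc => heJ i hc.1)
        have hsum : (k + 1) * M.rkSet A ≤ ∑ i, (J i ∩ A).ncard := by
          calc (k + 1) * M.rkSet A = ∑ _i : Fin (k + 1), M.rkSet A := by
                rw [Finset.sum_const, Finset.card_univ, Fintype.card_fin, smul_eq_mul]
            _ ≤ _ := Finset.sum_le_sum fun i _ => hri i
        rw [ncard_singleton] at hcount
        have hN : (k + 1) * M.rkSet A + 1 ≤ A.ncard := le_trans (Nat.add_le_add_right hsum 1) hcount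
        have hubA := hub A hAE ⟨e, heA⟩
        have hQ : ((k : ℚ) + 1) * (M.rkSet A : ℚ) + 1 ≤ (A.ncard : ℚ) := by exact_mod_cast hN
        have hmul : ((k : ℚ) + ε) * (M.rkSet A : ℚ) ≤ ((k : ℚ) + 1) * (M.rkSet A : ℚ) :=
          mul_le_mul_of_nonneg_right (by linarith) (by positivity)
        linarith

lemma phase2 (k : ℕ) (ε : ℚ) (hε0 : 0 ≤ ε) (hε1 : ε < 1)
    (hub : ∀ X ⊆ M.E, X.Nonempty → (X.ncard : ℚ) ≤ ((k : ℚ) + ε) * M.rkSet X) :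
    ∀ n : ℕ, ∀ J : Fin (k + 1) → Set α, (∀ i, M.Indep (J i)) →
    (∀ i j, i ≠ j → Disjoint (J i) (J j)) → (⋃ i, J i) = M.E → (J (Fin.last k)).ncard ≤ n →
    ∃ I : Fin (k + 1) → Set α, (∀ i, M.Indep (I i)) ∧ (Set.univ.PairwiseDisjoint I) ∧
      (⋃ i, I i) = M.E ∧ ∃ i, ((I i).ncard : ℚ) ≤ ε * M.rank := by
  intro n
  induction n with
  | zero =>
    intro J hind hdisj hun hcard
    have hL : J (Fin.last k) = ∅ := by
      rcases eq_empty_or_nonempty (J (Fin.last k)) with h | h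
      · exact h
      · have := (ncard_pos (hind _).fin).2 h; omega
    refine ⟨J, hind, fun i _ j _ hij => hdisj i j hij, hun, Fin.last k, ?_⟩
    rw [hL]
    simp only [ncard_empty, Nat.cast_zero]
    exact mul_nonneg hε0 (by positivity)
  | succ n IH =>
    intro J hind hdisj hun hcard
    set L := J (Fin.last k) with hLdef
    set Jk : Fin k → Set α := fun i => J i.castSucc with hJkdef
    have hlastne : ∀ i : Fin k, Fin.last k ≠ i.castSucc := fun i h =>
      (Fin.castSucc_lt_last i).ne' h
    have hkind : ∀ i, M.Indep (Jk i) := fun i => hind _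
    have hkdisj : ∀ i j : Fin k, i ≠ j → Disjoint (Jk i) (Jk j) := fun i j hij =>
      hdisj _ _ fun h => hij (Fin.castSucc_injective _ h)
    have hLdisj : ∀ i : Fin k, Disjoint L (Jk i) := fun i => hdisj _ _ (hlastne i)
    have heJk : ∀ e ∈ L, ∀ i : Fin k, e ∉ Jk i := fun e he i hc =>
      disjoint_left.1 (hLdisj i) he hc
    have heE : ∀ e ∈ L, e ∈ M.E := fun e he => (hind _).subset_ground he
    by_cases hcase : ∃ e ∈ L, ∃ J' : Fin k → Set α, (∀ i, M.Indep (J' i)) ∧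
        (∀ i j, i ≠ j → Disjoint (J' i) (J' j)) ∧ (⋃ i, J' i) = insert e (⋃ i, Jk i)
    · obtain ⟨e, heL, J', h1, h2, h3⟩ := hcase
      set G : Fin (k + 1) → Set α := Fin.snoc J' (L \ {e}) with hGdef
      have hGcast : ∀ i : Fin k, G i.castSucc = J' i := fun i => Fin.snoc_castSucc ..
      have hGlast : G (Fin.last k) = L \ {e} := Fin.snoc_last ..
      have hJ'sub : ∀ i, J' i ⊆ insert e (⋃ i, Jk i) := fun i => by
        rw [← h3]; exact subset_iUnion J' i
      have hdisjel : Disjoint (insert e (⋃ i, Jk i)) (L \ {e}) := by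
        rw [disjoint_left]
        rintro z (rfl | hz) hzL
        · exact hzL.2 rfl
        · obtain ⟨i, hi⟩ := mem_iUnion.1 hz
          exact disjoint_left.1 (hLdisj i) hzL.1 hi
      have hGind : ∀ i, M.Indep (G i) := by
        intro i
        rcases Fin.eq_castSucc_or_eq_last i with ⟨j, rfl⟩ | rfl
        · rw [hGcast]; exact h1 j
        · rw [hGlast]; exact (hind _).subset diff_subset
      have hGdisj : ∀ a b, a ≠ b → Disjoint (G a) (G b) := by
        intro a b hab
        rcases Fin.eq_castSucc_or_eq_last a with ⟨i, rfl⟩ | rfl <;>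
          rcases Fin.eq_castSucc_or_eq_last b with ⟨j, rfl⟩ | rfl
        · rw [hGcast, hGcast]; exact h2 i j fun h => hab (h ▸ rfl)
        · rw [hGcast, hGlast]; exact hdisjel.mono_left (hJ'sub i)
        · rw [hGlast, hGcast]; exact (hdisjel.mono_left (hJ'sub j)).symm
        · exact absurd rfl hab
      have hGun : (⋃ i, G i) = M.E := by
        rw [iUnion_fin_split G]
        have hcg : (⋃ i : Fin k, G i.castSucc) = ⋃ i, J' i := iUnion_congr hGcast
        rw [hcg, hGlast, h3, ← hun, iUnion_fin_split J]
        ext z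
        simp only [mem_union, mem_insert_iff, mem_diff, mem_singleton_iff]
        constructor
        · rintro ((rfl | hz) | ⟨hz, -⟩)
          · exact Or.inr heL
          · exact Or.inl hz
          · exact Or.inr hz
        · rintro (hz | hz)
          · exact Or.inl (Or.inr hz)
          · by_cases hze : z = e
            · exact Or.inl (Or.inl hze)
            · exact Or.inr ⟨hz, hze⟩
      refine IH G hGind hGdisj hGun ?_
      rw [hGlast, ncard_diff_singleton_of_mem heL]
      have : 0 < L.ncard := (ncard_pos (hind _).fin).2 ⟨e, heL⟩
      omega
    · push_neg at hcase
      have hAe : ∀ e ∈ L, ∃ A, e ∈ A ∧ A ⊆ insert e (⋃ i, Jk i) ∧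
          ∀ i, A ⊆ M.closure (Jk i ∩ A) := by
        intro e he
        rcases aug_dichotomy Jk e hkind hkdisj (heE e he) (heJk e he) with h | h
        · obtain ⟨J', hh1, hh2, hh3⟩ := h
          exact absurd hh3 (hcase e he J' hh1 hh2)
        · exact h
      choose! A hA1 hA2 hA3 using hAe
      set B := ⋃ e ∈ L, A e with hBdef
      have hLB : L ⊆ B := fun e he => mem_biUnion he (hA1 e he)
      have hBsub : B ⊆ M.E := by
        rintro z hz
        obtain ⟨e, he, hze⟩ := mem_iUnion₂.1 hz
        rcases hA2 e he hze with h | hz'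
        · rw [h]; exact heE e he
        · obtain ⟨i, hi⟩ := mem_iUnion.1 hz'
          exact (hkind i).subset_ground hi
      have hBcl : ∀ i : Fin k, B ⊆ M.closure (Jk i ∩ B) := by
        intro i z hz
        obtain ⟨e, he, hze⟩ := mem_iUnion₂.1 hz
        refine M.closure_subset_closure (inter_subset_inter_right _ ?_) (hA3 e he i hze)
        exact fun w hw => mem_biUnion he hw
      rcases eq_empty_or_nonempty L with hLemp | hLne
      · refine ⟨J, hind, fun i _ j _ hij => hdisj i j hij, hun, Fin.last k, ?_⟩
        rw [← hLdef, hLemp]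
        simp only [ncard_empty, Nat.cast_zero]
        exact mul_nonneg hε0 (by positivity)
      · have hBfin : B.Finite := M.ground_finite.subset hBsub
        have hri : ∀ i, M.rkSet B ≤ (Jk i ∩ B).ncard := fun i =>
          rkSet_le_ncard_of_subset_closure ((hkind i).subset inter_subset_left) (hBcl i)
        have hcount : (∑ i, (Jk i ∩ B).ncard) + L.ncard ≤ B.ncard :=
          ncard_parts_le hBfin (fun i => Jk i ∩ B) L (fun i => inter_subset_right)
            (fun i j hij => (hkdisj i j hij).mono inter_subset_left inter_subset_left)
            hLB (fun i => (hLdisj i).mono_right inter_subset_left)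
        have hsum : k * M.rkSet B ≤ ∑ i, (Jk i ∩ B).ncard := by
          calc k * M.rkSet B = ∑ _i : Fin k, M.rkSet B := by
                rw [Finset.sum_const, Finset.card_univ, Fintype.card_fin, smul_eq_mul]
            _ ≤ _ := Finset.sum_le_sum fun i _ => hri i
        have hN : k * M.rkSet B + L.ncard ≤ B.ncard := le_trans (Nat.add_le_add_right hsum _) hcount
        have hubB := hub B hBsub (hLne.mono hLB)
        have hQ : (k : ℚ) * (M.rkSet B : ℚ) + (L.ncard : ℚ) ≤ (B.ncard : ℚ) := by
          exact_mod_cast hN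
        have hrr : (M.rkSet B : ℚ) ≤ (M.rank : ℚ) := by exact_mod_cast rkSet_le_rank hBsub
        have hexp : ((k : ℚ) + ε) * (M.rkSet B : ℚ)
            = (k : ℚ) * (M.rkSet B : ℚ) + ε * (M.rkSet B : ℚ) := by ring
        have h2 : ε * (M.rkSet B : ℚ) ≤ ε * (M.rank : ℚ) := mul_le_mul_of_nonneg_left hrr hε0
        refine ⟨J, hind, fun i _ j _ hij => hdisj i j hij, hun, Fin.last k, ?_⟩
        rw [← hLdef]
        linarith [hubB]

end Matroid


/-- Strengthened matroid partition theorem: if `γ(M) = k + ε` with `0 ≤ ε < 1`, then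
`E(M)` partitions into `k + 1` independent sets, one of size at most `ε · r(M)`. -/
theorem stmt4 (M : Matroid α) [M.Finite] (k : ℕ) (ε : ℚ) (hε0 : 0 ≤ ε) (hε1 : ε < 1)
    (hub : ∀ X ⊆ M.E, X.Nonempty → (X.ncard : ℚ) ≤ ((k : ℚ) + ε) * M.rkSet X)
    (hattain : ∃ X ⊆ M.E, X.Nonempty ∧ (X.ncard : ℚ) = ((k : ℚ) + ε) * M.rkSet X) :
    ∃ I : Fin (k + 1) → Set α, (∀ i, M.Indep (I i)) ∧
      (Set.univ.PairwiseDisjoint I) ∧ (⋃ i, I i) = M.E ∧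
      ∃ i, ((I i).ncard : ℚ) ≤ ε * M.rank := by
  obtain ⟨J, h1, h2, h3⟩ := Matroid.edmonds_cover k ε hε0 hε1 hub
  exact Matroid.phase2 k ε hε0 hε1 hub (J (Fin.last k)).ncard J h1 h2 h3 le_rfl
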